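/- Let G be a Hausdorff topological group acting on a set X, let x_0 ∈ X be a point whose stabilizer G_{x_0} is closed in G, and let w = v_1 ⋯ v_n be a reduced word in the free group on k generators. Then the set of tuples (g_1, …, g_k) ∈ G^k for which the trajectory points x_0, x_1, …, x_n of x_0 under (w, (g_1,…,g_k)) are pairwise distinct is an open subset of G^k (with the product topology). -/

import Mathlib

/-- Evaluation of the letter `p` (a generator index together with a sign) at the
tuple `g`: the letter `(i, true)` evaluates to `g i`, while `(i, false)`
evaluates to `(g i)⁻¹`. -/
def letterEval {G : Type*} [Group G] {k : ℕ} (g : Fin k → G) (p : Fin k × Bool) : G :=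
  if p.2 then g p.1 else (g p.1)⁻¹

/-- The trajectory `x_0, x_1, …` of the point `x0` under the word with letters
`v 0, v 1, …` evaluated at the tuple `g`: `x_{j+1} = v_{j}(g) • x_j`. -/
def traj {G X : Type*} [Group G] [MulAction G X] {k : ℕ}
    (g : Fin k → G) (v : ℕ → Fin k × Bool) (x0 : X) : ℕ → X
  | 0 => x0
  | j + 1 => letterEval g (v j) • traj g v x0 j

/-- The word with letters `v 0, …, v (n-1)` is reduced: no two adjacent letters
have the same generator index and opposite signs. -/
def IsReducedWord {k : ℕ} (n : ℕ) (v : ℕ → Fin k × Bool) : Prop :=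
  ∀ j, j + 1 < n → (v j).1 = (v (j + 1)).1 → (v j).2 = (v (j + 1)).2


def wmap {G : Type*} [Group G] {k : ℕ} (v : ℕ → Fin k × Bool) (g : Fin k → G) : ℕ → G
  | 0 => 1
  | j + 1 => letterEval g (v j) * wmap v g j

lemma traj_eq_wmap_smul {G X : Type*} [Group G] [MulAction G X] {k : ℕ}
    (g : Fin k → G) (v : ℕ → Fin k × Bool) (x0 : X) (j : ℕ) :
    traj g v x0 j = wmap v g j • x0 := by
  induction j with
  | zero => simp [traj, wmap]
  | succ j ih => simp [traj, wmap, ih, mul_smul]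

lemma continuous_wmap {G : Type*} [Group G] [TopologicalSpace G] [IsTopologicalGroup G]
    {k : ℕ} (v : ℕ → Fin k × Bool) (j : ℕ) :
    Continuous (fun g : Fin k → G => wmap v g j) := by
  induction j with
  | zero => simpa [wmap] using continuous_const
  | succ j ih =>
    simp only [wmap]
    refine Continuous.mul ?_ ih
    unfold letterEval
    by_cases h : (v j).2 <;> simp only [h, if_true, if_false]
    · exact continuous_apply _
    · exact (continuous_apply _).inv

/-- Let `G` be a Hausdorff topological group acting on a set `X`, let `x₀ ∈ X`
have closed stabilizer, and let `w = v_1 ⋯ v_n` be a reduced word on `k`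
generators.  Then the set of tuples `(g_1, …, g_k) ∈ G^k` whose trajectory
points `x_0, x_1, …, x_n` of `x₀` are pairwise distinct is open in `G^k`. -/
theorem distinct_trajectory_isOpen {G X : Type*} [Group G] [TopologicalSpace G]
    [IsTopologicalGroup G] [T2Space G] [MulAction G X]
    (x₀ : X) (hclosed : IsClosed {g : G | g • x₀ = x₀})
    {k n : ℕ} (v : ℕ → Fin k × Bool) (hred : IsReducedWord n v) :
    IsOpen {g : Fin k → G | ∀ i j, i ≤ n → j ≤ n → i ≠ j →
      traj g v x₀ i ≠ traj g v x₀ j} := by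
  have key : ∀ i j : ℕ, IsClosed {g : Fin k → G | traj g v x₀ i = traj g v x₀ j} := by
    intro i j
    have h1 : {g : Fin k → G | traj g v x₀ i = traj g v x₀ j}
        = (fun g : Fin k → G => (wmap v g i)⁻¹ * wmap v g j) ⁻¹' {g : G | g • x₀ = x₀} := by
      ext g
      simp only [Set.mem_setOf_eq, Set.mem_preimage, traj_eq_wmap_smul, mul_smul,
        inv_smul_eq_iff]
      exact eq_comm
    rw [h1]
    exact hclosed.preimage (((continuous_wmap v i).inv).mul (continuous_wmap v j))
  have h2 : {g : Fin k → G | ∀ i j, i ≤ n → j ≤ n → i ≠ j →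
        traj g v x₀ i ≠ traj g v x₀ j}
      = ⋂ (p : Fin (n + 1) × Fin (n + 1)),
          {g : Fin k → G | (p.1 : ℕ) ≠ (p.2 : ℕ) →
            traj g v x₀ (p.1 : ℕ) ≠ traj g v x₀ (p.2 : ℕ)} := by
    ext g
    simp only [Set.mem_iInter, Set.mem_setOf_eq]
    constructor
    · intro h p hp
      exact h p.1 p.2 (Nat.lt_succ_iff.mp p.1.2) (Nat.lt_succ_iff.mp p.2.2) hp
    · intro h i j hi hj hij
      exact h (⟨i, Nat.lt_succ_iff.mpr hi⟩, ⟨j, Nat.lt_succ_iff.mpr hj⟩) hij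
  rw [h2]
  apply isOpen_iInter_of_finite
  intro p
  by_cases hp : (p.1 : ℕ) = (p.2 : ℕ)
  · have : {g : Fin k → G | (p.1 : ℕ) ≠ (p.2 : ℕ) →
        traj g v x₀ (p.1 : ℕ) ≠ traj g v x₀ (p.2 : ℕ)} = Set.univ := by
      ext g; simp [hp]
    rw [this]; exact isOpen_univ
  · have : {g : Fin k → G | (p.1 : ℕ) ≠ (p.2 : ℕ) →
        traj g v x₀ (p.1 : ℕ) ≠ traj g v x₀ (p.2 : ℕ)}
      = {g : Fin k → G | traj g v x₀ (p.1 : ℕ) = traj g v x₀ (p.2 : ℕ)}ᶜ := by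
      ext g; simp [hp]
    rw [this]
    exact (key _ _).isOpen_compl
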